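/- For all f, g, h ∈ F₃ the cocycle-type relation φ_{l(f)}(g ⋄ h) = φ_{l(f ⋄ g)}(h) · φ_{l(f)}(g) holds. -/

import Mathlib

open Set
open scoped Classical

noncomputable section

/-- An address: a finite word in the alphabet `{0,1,2}`. -/
abbrev Address : Type := List (Fin 3)

/-- Left endpoint of the triadic interval `I_α`. -/
def addrLeft : Address → ℝ
  | [] => 0
  | i :: α => ((i : ℕ) : ℝ) / 3 + addrLeft α / 3

/-- Length of the triadic interval `I_α`. -/
def addrLen (α : Address) : ℝ := (1 / 3 : ℝ) ^ α.length

/-- The triadic subinterval `I_α ⊆ [0,1]` determined by the address `α`. -/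
def Iaddr (α : Address) : Set ℝ := Set.Icc (addrLeft α) (addrLeft α + addrLen α)

/-- The linear orientation-preserving isomorphism `ψ_α : I_α → [0,1]`. -/
def psi (α : Address) (t : ℝ) : ℝ := (t - addrLeft α) / addrLen α

/-- The inverse `ψ_α⁻¹ : [0,1] → I_α`. -/
def psiInv (α : Address) (t : ℝ) : ℝ := addrLeft α + addrLen α * t

/-- `φ_α(f)` acts as `ψ_α⁻¹ ∘ f ∘ ψ_α` on `I_α` and as the identity elsewhere. -/
def phi (α : Address) (f : ℝ → ℝ) : ℝ → ℝ :=
  fun t => if t ∈ Iaddr α then psiInv α (f (psi α t)) else t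

/-- A triadic rational. -/
def IsTriadic (q : ℝ) : Prop := ∃ a : ℤ, ∃ n : ℕ, q = (a : ℝ) / 3 ^ n

/-- Membership in the Brown–Thompson group `F₃`, realized as piecewise-linear
homeomorphisms of `[0,1]` (extended by the identity to all of `ℝ`) with breakpoints
at triadic rationals and slopes powers of `3`. The group product is `f·g = g ∘ f`. -/
def IsF3 (f : ℝ → ℝ) : Prop :=
  (∀ t, t ∉ Set.Icc (0 : ℝ) 1 → f t = t) ∧
  Set.BijOn f (Set.Icc 0 1) (Set.Icc 0 1) ∧
  StrictMonoOn f (Set.Icc 0 1) ∧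
  ∃ breaks : Finset ℝ, (∀ b ∈ breaks, IsTriadic b) ∧
    ∀ x ∈ Set.Icc (0 : ℝ) 1, x ∉ breaks →
      ∃ (k : ℤ) (c : ℝ), IsTriadic c ∧
        ∀ᶠ y in nhdsWithin x (Set.Icc 0 1), f y = (3 : ℝ) ^ k * y + c

/-- `f` maps `I_α` linearly (preserving orientation, with triadic affine data)
onto the triadic interval `I_β`. -/
def IsTriadicLinearOn (f : ℝ → ℝ) (α β : Address) : Prop :=
  ∀ t ∈ Iaddr α, f t = psiInv β (psi α t)

/-- The depth of the maximal all-`i` leaf of the reduced domain tree of `f`: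
the least `n` such that `f` maps `I_{iⁿ}` linearly onto a triadic interval. -/
def leafExp (i : Fin 3) (f : ℝ → ℝ) : ℕ :=
  sInf {n : ℕ | ∃ β : Address, IsTriadicLinearOn f (List.replicate n i) β}

/-- The address `l(f) = 1ⁿ` of the central leaf of `f` (the leaf of the reduced
domain tree whose interval contains `1/2`). -/
def centralLeaf (f : ℝ → ℝ) : Address := List.replicate (leafExp 1 f) 1

/-- The central monoid operation `f ⋄ g = φ_{l(f)}(g) · f` (recall `a·b = b ∘ a`). -/
def diam (f g : ℝ → ℝ) : ℝ → ℝ := fun t => f (phi (centralLeaf f) g t)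

lemma addrLen_pos (α : Address) : 0 < addrLen α := by unfold addrLen; positivity

lemma addrLen_ne (α : Address) : addrLen α ≠ 0 := (addrLen_pos α).ne'

lemma psi_psiInv (α : Address) (t : ℝ) : psi α (psiInv α t) = t := by
  have h := addrLen_ne α
  unfold psi psiInv; field_simp; ring

lemma psiInv_psi (α : Address) (t : ℝ) : psiInv α (psi α t) = t := by
  have h := addrLen_ne α
  unfold psi psiInv; field_simp; ring

lemma addrLeft_append (α β : Address) :
    addrLeft (α ++ β) = addrLeft α + addrLen α * addrLeft β := by
  induction α with
  | nil => simp [addrLeft, addrLen]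
  | cons i α ih => simp [addrLeft, addrLen, ih]; ring

lemma addrLen_append (α β : Address) :
    addrLen (α ++ β) = addrLen α * addrLen β := by
  simp [addrLen, List.length_append, pow_add]

lemma psiInv_append (α β : Address) (t : ℝ) :
    psiInv (α ++ β) t = psiInv α (psiInv β t) := by
  simp [psiInv, addrLeft_append, addrLen_append]; ring

lemma psi_append (α β : Address) (t : ℝ) :
    psi (α ++ β) t = psi β (psi α t) := by
  have := psi_psiInv (α ++ β) (psi β (psi α t))
  rw [psiInv_append, psiInv_psi, psiInv_psi] at this
  exact this

lemma addrLeft_nonneg (α : Address) : 0 ≤ addrLeft α := by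
  induction α with
  | nil => simp [addrLeft]
  | cons i α ih => unfold addrLeft; positivity

lemma addrLeft_add_len_le_one (α : Address) : addrLeft α + addrLen α ≤ 1 := by
  induction α with
  | nil => simp [addrLeft, addrLen]
  | cons i α ih =>
      unfold addrLeft addrLen
      have hi : ((i : ℕ) : ℝ) ≤ 2 := by
        have := i.is_lt; exact_mod_cast Nat.lt_succ_iff.mp this
      have : addrLeft α + (1/3 : ℝ) ^ α.length ≤ 1 := ih
      simp only [List.length_cons, pow_succ]
      nlinarith

lemma Iaddr_subset_unit (α : Address) : Iaddr α ⊆ Set.Icc 0 1 := by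
  intro t ht
  obtain ⟨h1, h2⟩ := ht
  constructor
  · linarith [addrLeft_nonneg α]
  · linarith [addrLeft_add_len_le_one α]

lemma psiInv_mem (α : Address) {t : ℝ} (ht : t ∈ Set.Icc (0:ℝ) 1) :
    psiInv α t ∈ Iaddr α := by
  obtain ⟨h1, h2⟩ := ht
  have hp := addrLen_pos α
  constructor <;> unfold psiInv <;> nlinarith

lemma psi_mem (α : Address) {t : ℝ} (ht : t ∈ Iaddr α) :
    psi α t ∈ Set.Icc (0:ℝ) 1 := by
  obtain ⟨h1, h2⟩ := ht
  have hp := addrLen_pos α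
  constructor <;> unfold psi
  · exact div_nonneg (by linarith) hp.le
  · rw [div_le_one hp]; linarith

lemma mem_Iaddr_append {α β : Address} {t : ℝ} :
    t ∈ Iaddr (α ++ β) ↔ t ∈ Iaddr α ∧ psi α t ∈ Iaddr β := by
  have hp := addrLen_pos α
  have hq := addrLen_pos β
  have h1 := addrLeft_nonneg β
  have h2 := addrLeft_add_len_le_one β
  unfold Iaddr psi
  rw [addrLeft_append, addrLen_append]
  simp only [Set.mem_Icc]
  constructor
  · rintro ⟨ha, hb⟩
    refine ⟨⟨by nlinarith, by nlinarith⟩, ⟨by rw [le_div_iff₀ hp]; nlinarith,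
      by rw [div_le_iff₀ hp]; nlinarith⟩⟩
  · rintro ⟨⟨_, _⟩, ⟨hc, hd⟩⟩
    rw [le_div_iff₀ hp] at hc
    rw [div_le_iff₀ hp] at hd
    constructor <;> nlinarith

lemma addrLeft_cons (i : Fin 3) (α : Address) :
    addrLeft (i :: α) = ((i : ℕ) : ℝ) / 3 + addrLeft α / 3 := rfl

/-- Every address left endpoint is a natural number over `3^length`. -/
lemma exists_addrNum (β : Address) :
    ∃ b : ℕ, (b : ℝ) = addrLeft β * 3 ^ β.length := by
  induction β with
  | nil => exact ⟨0, by simp [addrLeft]⟩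
  | cons i β ih =>
      obtain ⟨b, hb⟩ := ih
      refine ⟨(i : ℕ) * 3 ^ β.length + b, ?_⟩
      push_cast
      rw [addrLeft_cons, List.length_cons, pow_succ]
      linear_combination hb

/-- Every natural `b < 3^m` is the numerator of a length-`m` address. -/
lemma exists_address_of_nat (m : ℕ) (b : ℕ) (hb : b < 3 ^ m) :
    ∃ β : Address, β.length = m ∧ addrLeft β = (b : ℝ) / 3 ^ m := by
  induction m generalizing b with
  | zero =>
      interval_cases b
      exact ⟨[], by simp [addrLeft]⟩
  | succ m ih =>
      have h3 : (0:ℕ) < 3 ^ m := Nat.pow_pos (by norm_num)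
      set i := b / 3 ^ m with hi
      set r := b % 3 ^ m with hr
      have hilt : i < 3 := by
        rw [hi]
        apply Nat.div_lt_of_lt_mul
        calc b < 3 ^ (m+1) := hb
        _ = 3 ^ m * 3 := by ring
      have hrlt : r < 3 ^ m := Nat.mod_lt _ h3
      obtain ⟨β, hlen, hleft⟩ := ih r hrlt
      refine ⟨⟨i, hilt⟩ :: β, by simp [hlen], ?_⟩
      unfold addrLeft
      rw [hleft]
      have hbn : b = i * 3 ^ m + r := by
        rw [hi, hr, Nat.mul_comm]
        exact (Nat.div_add_mod b (3 ^ m)).symm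
      have hb' : (b : ℝ) = (i : ℕ) * 3 ^ m + (r : ℕ) := by exact_mod_cast hbn
      rw [hb']
      simp only [Fin.val_mk]
      field_simp
      ring

/-- Core construction: an affine map with the right triadic data is
`IsTriadicLinearOn` for some target address. -/
lemma core_lemma (f : ℝ → ℝ) (α : Address) (m : ℕ) (b : ℤ) (A B : ℝ)
    (hA : A = (b : ℝ) / 3 ^ m) (hB : B = (1/3 : ℝ) ^ m)
    (hf : ∀ t ∈ Iaddr α, f t = A + B * psi α t)
    (hA0 : 0 ≤ A) (hAB : A + B ≤ 1) :
    ∃ β : Address, IsTriadicLinearOn f α β := by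
  have h3m : (0:ℝ) < 3 ^ m := by positivity
  have hb0 : 0 ≤ b := by
    by_contra hneg
    push_neg at hneg
    have : (b : ℝ) < 0 := by exact_mod_cast hneg
    rw [hA] at hA0
    have := div_neg_of_neg_of_pos this h3m
    linarith
  have hBpos : (0:ℝ) < B := by rw [hB]; positivity
  have hblt : b < 3 ^ m := by
    have h1 : (b : ℝ) / 3 ^ m + (1/3:ℝ)^m ≤ 1 := by rw [← hA, ← hB]; exact hAB
    have h2 : (1/3:ℝ)^m = 1 / 3 ^ m := by rw [div_pow]; norm_num
    rw [h2, ← add_div, div_le_one h3m] at h1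
    have : (b : ℝ) < 3 ^ m := by linarith
    exact_mod_cast this
  have htn : b.toNat < 3 ^ m := by
    have h1 : (b.toNat : ℤ) < 3 ^ m := by rwa [Int.toNat_of_nonneg hb0]
    exact_mod_cast h1
  obtain ⟨β, hlen, hleft⟩ := exists_address_of_nat m b.toNat htn
  have hleft' : addrLeft β = A := by
    rw [hleft, hA]
    congr 1
    exact_mod_cast Int.toNat_of_nonneg hb0
  have hlen' : addrLen β = B := by rw [addrLen, hlen, hB]
  refine ⟨β, fun t ht => ?_⟩
  rw [hf t ht]
  unfold psiInv
  rw [hleft', hlen']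

lemma Iaddr_append_subset (α β : Address) : Iaddr (α ++ β) ⊆ Iaddr α :=
  fun _ ht => (mem_Iaddr_append.mp ht).1

lemma linearOn_snoc {f : ℝ → ℝ} {α β : Address} (i : Fin 3)
    (h : IsTriadicLinearOn f α β) : IsTriadicLinearOn f (α ++ [i]) (β ++ [i]) := by
  intro t ht
  have ht' := Iaddr_append_subset α [i] ht
  rw [h t ht', psiInv_append, psi_append, psiInv_psi]

/-- The set of depths at which `f` is triadic-linear on the central interval. -/
def leafSet (f : ℝ → ℝ) : Set ℕ :=
  {n : ℕ | ∃ β : Address, IsTriadicLinearOn f (List.replicate n 1) β}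

lemma leafExp_one_eq (f : ℝ → ℝ) : leafExp 1 f = sInf (leafSet f) := rfl

lemma leafSet_succ {f : ℝ → ℝ} {n : ℕ} (h : n ∈ leafSet f) : n + 1 ∈ leafSet f := by
  obtain ⟨β, hβ⟩ := h
  exact ⟨β ++ [1], by rw [List.replicate_succ']; exact linearOn_snoc 1 hβ⟩

lemma leafSet_mono {f : ℝ → ℝ} {n m : ℕ} (h : n ∈ leafSet f) (hnm : n ≤ m) :
    m ∈ leafSet f := by
  induction m, hnm using Nat.le_induction with
  | base => exact h
  | succ m _ ih => exact leafSet_succ ih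

lemma leafExp_mem {f : ℝ → ℝ} (hne : (leafSet f).Nonempty) :
    leafExp 1 f ∈ leafSet f := Nat.sInf_mem hne

lemma leafExp_eq {f : ℝ → ℝ} {n : ℕ} (hmem : n ∈ leafSet f)
    (hnot : ∀ m, m + 1 = n → m ∉ leafSet f) : leafExp 1 f = n := by
  refine le_antisymm (Nat.sInf_le hmem) ?_
  by_contra hlt
  push_neg at hlt
  have hmem' : leafExp 1 f ∈ leafSet f := leafExp_mem ⟨n, hmem⟩
  rcases n with _ | m
  · omega
  · exact hnot m rfl (leafSet_mono hmem' (by omega))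

lemma not_mem_leafSet_of_lt {f : ℝ → ℝ} {n : ℕ} (h : n < leafExp 1 f) :
    n ∉ leafSet f := fun hn => absurd (Nat.sInf_le hn) (not_le.mpr h)

lemma addrLeft_replicate_one (n : ℕ) :
    addrLeft (List.replicate n 1) = (1 - (1/3:ℝ)^n) / 2 := by
  induction n with
  | zero => simp [addrLeft]
  | succ n ih =>
      rw [List.replicate_succ, addrLeft_cons, ih]
      have h1 : (((1 : Fin 3) : ℕ) : ℝ) = 1 := by norm_num
      rw [h1, pow_succ]
      ring

lemma half_not_triadic : ¬ IsTriadic (1/2 : ℝ) := by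
  rintro ⟨a, n, ha⟩
  have h3 : (0:ℝ) < 3 ^ n := by positivity
  have h : (3:ℝ) ^ n = 2 * a := by
    field_simp at ha
    linarith
  have hz : (3:ℤ) ^ n = 2 * a := by exact_mod_cast h
  have hodd : Odd ((3:ℤ) ^ n) := (by decide : Odd (3:ℤ)).pow
  rw [hz] at hodd
  exact (Int.not_odd_iff_even.mpr ⟨a, by ring⟩) hodd

lemma abs_sub_half_of_mem {n : ℕ} {t : ℝ} (ht : t ∈ Iaddr (List.replicate n 1)) :
    |t - 1/2| ≤ (1/3:ℝ)^n := by
  obtain ⟨h1, h2⟩ := ht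
  rw [addrLeft_replicate_one] at h1 h2
  have hlen : addrLen (List.replicate n 1) = (1/3:ℝ)^n := by
    simp [addrLen]
  rw [hlen] at h2
  rw [abs_le]
  constructor <;> [linarith; nlinarith [pow_pos (by norm_num : (0:ℝ) < 1/3) n]]

lemma addrLen_replicate_one (n : ℕ) :
    addrLen (List.replicate n 1) = (1/3:ℝ)^n := by simp [addrLen]

lemma left_mem_Iaddr (α : Address) : addrLeft α ∈ Iaddr α :=
  ⟨le_refl _, by linarith [addrLen_pos α]⟩

lemma right_mem_Iaddr (α : Address) : addrLeft α + addrLen α ∈ Iaddr α :=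
  ⟨by linarith [addrLen_pos α], le_refl _⟩

lemma leafSet_nonempty {f : ℝ → ℝ} (hf : IsF3 f) : (leafSet f).Nonempty := by
  obtain ⟨hid, hbij, hmono, breaks, hbr, hpl⟩ := hf
  have h12 : (1/2 : ℝ) ∈ Set.Icc (0:ℝ) 1 := by norm_num
  have hnb : (1/2:ℝ) ∉ breaks := fun hb => half_not_triadic (hbr _ hb)
  obtain ⟨k, c, ⟨e, N, hc⟩, hev⟩ := hpl _ h12 hnb
  rcases Metric.mem_nhdsWithin_iff.mp hev with ⟨ε, εpos, hball⟩
  obtain ⟨n₁, hn₁⟩ := exists_pow_lt_of_lt_one εpos (by norm_num : (1/3:ℝ) < 1)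
  set n : ℕ := max n₁ (k + N).toNat with hn
  set α : Address := List.replicate n (1 : Fin 3) with hα
  have hlenα : α.length = n := by simp [hα]
  have hkn : (k : ℤ) + N ≤ n := by
    have h1 : ((k + N).toNat : ℤ) ≤ (n : ℤ) := by
      exact_mod_cast le_max_right n₁ (k + N).toNat
    have h2 : (k + N : ℤ) ≤ ((k + N).toNat : ℤ) := Int.self_le_toNat _
    omega
  have haff : ∀ t ∈ Iaddr α, f t = (3:ℝ)^k * t + c := by
    intro t ht
    apply hball
    refine ⟨?_, Iaddr_subset_unit _ ht⟩
    rw [Metric.mem_ball, Real.dist_eq]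
    calc |t - 1/2| ≤ (1/3:ℝ)^n := abs_sub_half_of_mem ht
    _ ≤ (1/3:ℝ)^n₁ := pow_le_pow_of_le_one (by norm_num) (by norm_num)
        (le_max_left _ _)
    _ < ε := hn₁
  obtain ⟨an, han⟩ := exists_addrNum α
  rw [hlenα] at han
  set aL := addrLeft α with haL
  set m : ℕ := ((n:ℤ) - k).toNat with hm
  have hmk : (m : ℤ) = (n:ℤ) - k := Int.toNat_of_nonneg (by omega)
  have hmN : N ≤ m := by omega
  have h30 : (3:ℝ) ≠ 0 := by norm_num
  have h3m : (0:ℝ) < (3:ℝ)^m := by positivity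
  have hzpow : ∀ j : ℕ, (3:ℝ)^((j:ℤ)) = (3:ℝ)^j := fun j => zpow_natCast 3 j
  have hkm : (3:ℝ)^k * (3:ℝ)^m = (3:ℝ)^n := by
    rw [← hzpow m, ← hzpow n, ← zpow_add₀ h30, hmk]
    ring_nf
  have hthird : ∀ j : ℕ, ((1:ℝ)/3)^j = ((3:ℝ)^((j:ℤ)))⁻¹ := by
    intro j
    rw [hzpow]
    rw [div_pow]
    norm_num
  refine ⟨n, core_lemma f α m ((an : ℤ) + e * 3^(m - N))
    ((3:ℝ)^k * aL + c) ((3:ℝ)^k * (1/3)^n) ?_ ?_ ?_ ?_ ?_⟩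
  · -- A = b / 3^m
    rw [eq_div_iff h3m.ne']
    push_cast
    rw [add_mul, mul_comm ((3:ℝ)^k) aL, mul_assoc, hkm, hc]
    have hcm : (e:ℝ) / 3^N * 3^m = (e:ℝ) * 3^(m - N) := by
      rw [div_mul_eq_mul_div, mul_div_assoc]
      congr 1
      rw [div_eq_iff (by positivity : (0:ℝ) < 3^N).ne', ← pow_add]
      congr 1
      omega
    rw [hcm, ← han]
  · -- B = (1/3)^m
    rw [hthird n, hthird m, ← zpow_neg, ← zpow_neg, ← zpow_add₀ h30]
    congr 1
    omega
  · intro t ht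
    have htt : t = aL + (1/3:ℝ)^n * psi α t := by
      have := psiInv_psi α t
      unfold psiInv at this
      rw [← haL, hα, addrLen_replicate_one] at this
      linarith [this]
    rw [haff t ht]
    linear_combination (3:ℝ)^k * htt
  · -- 0 ≤ A
    have hmem := left_mem_Iaddr α
    have := (hbij.mapsTo (Iaddr_subset_unit α hmem)).1
    rw [haff _ hmem] at this
    exact this
  · -- A + B ≤ 1
    have hmem := right_mem_Iaddr α
    have := (hbij.mapsTo (Iaddr_subset_unit α hmem)).2
    rw [haff _ hmem] at this
    have hlen' : addrLen α = (1/3:ℝ)^n := by rw [hα, addrLen_replicate_one]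
    rw [hlen'] at this
    nlinarith [this]

lemma psi_left (α : Address) : psi α (addrLeft α) = 0 := by
  unfold psi; simp

lemma psi_right (α : Address) : psi α (addrLeft α + addrLen α) = 1 := by
  unfold psi
  rw [add_sub_cancel_left, div_self (addrLen_ne α)]

lemma phi_apply_mem {α : Address} {g : ℝ → ℝ} {t : ℝ} (ht : t ∈ Iaddr α) :
    phi α g t = psiInv α (g (psi α t)) := if_pos ht

lemma phi_apply_not_mem {α : Address} {g : ℝ → ℝ} {t : ℝ} (ht : t ∉ Iaddr α) :
    phi α g t = t := if_neg ht

/-- Part 1: the diamond of linear pieces is linear at the concatenated depth. -/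
lemma diam_linearOn {f g : ℝ → ℝ} (hg : IsF3 g) {δ γ : Address}
    (hδ : IsTriadicLinearOn f (centralLeaf f) δ)
    (hγ : IsTriadicLinearOn g (centralLeaf g) γ) :
    IsTriadicLinearOn (diam f g) (centralLeaf f ++ centralLeaf g) (δ ++ γ) := by
  intro t ht
  obtain ⟨ht1, ht2⟩ := mem_Iaddr_append.mp ht
  have hu : psi (centralLeaf g) (psi (centralLeaf f) t) ∈ Set.Icc (0:ℝ) 1 :=
    psi_mem _ ht2
  set u := psi (centralLeaf g) (psi (centralLeaf f) t) with hu'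
  have h1 : psiInv γ u ∈ Set.Icc (0:ℝ) 1 :=
    Iaddr_subset_unit γ (psiInv_mem γ hu)
  have h2 : psiInv (centralLeaf f) (psiInv γ u) ∈ Iaddr (centralLeaf f) :=
    psiInv_mem _ h1
  show f (phi (centralLeaf f) g t) = _
  rw [phi_apply_mem ht1, hγ _ ht2, ← hu', hδ _ h2, psi_psiInv,
    psiInv_append, psi_append]

/-- If `g` is triadic-linear on the whole interval, it is the identity there. -/
lemma eq_id_of_linearOn_nil {g : ℝ → ℝ} (hg : IsF3 g) {γ : Address}
    (hγ : IsTriadicLinearOn g [] γ) : ∀ s ∈ Set.Icc (0:ℝ) 1, g s = s := by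
  have hI : Iaddr [] = Set.Icc (0:ℝ) 1 := by
    unfold Iaddr addrLen addrLeft
    norm_num
  have hlin : ∀ s ∈ Set.Icc (0:ℝ) 1, g s = addrLeft γ + addrLen γ * s := by
    intro s hs
    have := hγ s (by rwa [hI])
    rwa [show psi [] s = s by unfold psi addrLeft addrLen; norm_num] at this
  have hγpos := addrLen_pos γ
  have hγ0 := addrLeft_nonneg γ
  have hγ1 := addrLeft_add_len_le_one γ
  -- surjectivity forces γ = []
  obtain ⟨s0, hs0, hgs0⟩ := hg.2.1.surjOn (by norm_num : (0:ℝ) ∈ Set.Icc (0:ℝ) 1)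
  obtain ⟨s1, hs1, hgs1⟩ := hg.2.1.surjOn (by norm_num : (1:ℝ) ∈ Set.Icc (0:ℝ) 1)
  rw [hlin s0 hs0] at hgs0
  rw [hlin s1 hs1] at hgs1
  obtain ⟨hs0a, hs0b⟩ := hs0
  obtain ⟨hs1a, hs1b⟩ := hs1
  have ha0 : addrLeft γ = 0 := by nlinarith
  have hl1 : addrLen γ = 1 := by nlinarith
  intro s hs
  rw [hlin s hs, ha0, hl1]
  ring

/-- If `g` is the identity on `[0,1]` then `φ_α(g)` is the identity. -/
lemma phi_id {g : ℝ → ℝ} (hgid : ∀ s ∈ Set.Icc (0:ℝ) 1, g s = s) (α : Address)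
    (t : ℝ) : phi α g t = t := by
  by_cases ht : t ∈ Iaddr α
  · rw [phi_apply_mem ht, hgid _ (psi_mem _ ht), psiInv_psi]
  · exact phi_apply_not_mem ht

/-- Part 2, main case: linearity of `f ⋄ g` at depth `N + n` forces linearity
of `g` at depth `n`. -/
lemma g_linear_of_diam {f g : ℝ → ℝ} (hg : IsF3 g) {n : ℕ} {β δ : Address}
    (hδ : IsTriadicLinearOn f (centralLeaf f) δ)
    (hβ : IsTriadicLinearOn (diam f g)
      (centralLeaf f ++ List.replicate n (1 : Fin 3)) β) :
    n ∈ leafSet g := by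
  set L := centralLeaf f with hL
  set α' : Address := List.replicate n (1 : Fin 3) with hα'
  have key : ∀ s ∈ Iaddr α', psiInv δ (g s) = psiInv β (psi α' s) := by
    intro s hs
    have hs01 : s ∈ Set.Icc (0:ℝ) 1 := Iaddr_subset_unit _ hs
    set t := psiInv L s with htdef
    have ht1 : t ∈ Iaddr L := psiInv_mem _ hs01
    have ht : t ∈ Iaddr (L ++ α') :=
      mem_Iaddr_append.mpr ⟨ht1, by rw [htdef, psi_psiInv]; exact hs⟩
    have h1 := hβ t ht
    have hgs : g s ∈ Set.Icc (0:ℝ) 1 := hg.2.1.mapsTo hs01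
    have hx : psiInv L (g s) ∈ Iaddr L := psiInv_mem _ hgs
    have h2 : diam f g t = psiInv δ (g s) := by
      show f (phi L g t) = _
      rw [phi_apply_mem ht1, htdef, psi_psiInv, hδ _ hx, psi_psiInv]
    rw [h2, psi_append, htdef, psi_psiInv] at h1
    exact h1
  -- extract the affine relation for g
  have hδpos := addrLen_pos δ
  have key' : ∀ s ∈ Iaddr α', g s =
      (addrLeft β - addrLeft δ) / addrLen δ +
        (addrLen β / addrLen δ) * psi α' s := by
    intro s hs
    have := key s hs
    unfold psiInv at this
    field_simp
    linarith [this]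
  set A := (addrLeft β - addrLeft δ) / addrLen δ with hA
  set B := addrLen β / addrLen δ with hB
  have hBpos : 0 < B := div_pos (addrLen_pos β) hδpos
  have hA0 : 0 ≤ A := by
    have hm := left_mem_Iaddr α'
    have h1 := (hg.2.1.mapsTo (Iaddr_subset_unit _ hm)).1
    rw [key' _ hm, psi_left] at h1
    linarith
  have hAB : A + B ≤ 1 := by
    have hm := right_mem_Iaddr α'
    have h1 := (hg.2.1.mapsTo (Iaddr_subset_unit _ hm)).2
    rw [key' _ hm, psi_right] at h1
    linarith
  -- lengths: |δ| ≤ |β|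
  have hlen : δ.length ≤ β.length := by
    by_contra hcon
    push_neg at hcon
    have : addrLen β / addrLen δ > 1 := by
      rw [gt_iff_lt, lt_div_iff₀ hδpos, one_mul]
      unfold addrLen
      exact pow_lt_pow_right_of_lt_one₀ (by norm_num) (by norm_num) hcon
    have : 1 < B := this
    linarith
  set m' := β.length - δ.length with hm'
  have hBval : B = (1/3:ℝ)^m' := by
    rw [hB]
    unfold addrLen
    rw [hm', pow_sub₀ _ (by norm_num) hlen]
    exact div_eq_mul_inv _ _
  obtain ⟨bβ, hbβ⟩ := exists_addrNum β
  obtain ⟨bδ, hbδ⟩ := exists_addrNum δ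
  have hAval : A = ((bβ - (bδ : ℤ) * 3 ^ m' : ℤ) : ℝ) / 3 ^ m' := by
    rw [hA]
    unfold addrLen
    have h3β : (0:ℝ) < 3 ^ β.length := by positivity
    have h3δ : (0:ℝ) < 3 ^ δ.length := by positivity
    have h3m : (0:ℝ) < 3 ^ m' := by positivity
    have hbβ' : addrLeft β = bβ / 3 ^ β.length := by
      rw [eq_div_iff h3β.ne']; linarith [hbβ]
    have hbδ' : addrLeft δ = bδ / 3 ^ δ.length := by
      rw [eq_div_iff h3δ.ne']; linarith [hbδ]
    have hsplit : (3:ℝ) ^ β.length = 3 ^ m' * 3 ^ δ.length := by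
      rw [← pow_add]
      congr 1
      omega
    rw [hbβ', hbδ']
    push_cast
    rw [div_pow, one_pow]
    rw [div_eq_div_iff (by positivity) h3m.ne']
    field_simp
    rw [hsplit]
    ring
  exact core_lemma g α' m' _ A B hAval hBval key' hA0 hAB

lemma leafExp_diam (f g : ℝ → ℝ) (hf : IsF3 f) (hg : IsF3 g) :
    leafExp 1 (diam f g) = leafExp 1 f + leafExp 1 g := by
  obtain ⟨δ, hδ⟩ := leafExp_mem (leafSet_nonempty hf)
  obtain ⟨γ, hγ⟩ := leafExp_mem (leafSet_nonempty hg)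
  apply leafExp_eq
  · refine ⟨δ ++ γ, ?_⟩
    rw [List.replicate_add]
    exact diam_linearOn hg hδ hγ
  · intro p hp hmem
    obtain ⟨β, hβ⟩ := hmem
    rcases hM : leafExp 1 g with _ | M'
    · -- g is linear on the whole interval: diam f g = f
      have hγ' : IsTriadicLinearOn g [] γ := by
        rw [hM] at hγ
        exact hγ
      have gid := eq_id_of_linearOn_nil hg hγ'
      have hfl : IsTriadicLinearOn f (List.replicate p (1 : Fin 3)) β := by
        intro t ht
        have : diam f g t = f t := by
          show f (phi (centralLeaf f) g t) = f t
          rw [phi_id gid]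
        rw [← this]
        exact hβ t ht
      exact not_mem_leafSet_of_lt (by omega) ⟨β, hfl⟩
    · -- reduce to linearity of g at depth M'
      have hple : p = leafExp 1 f + M' := by omega
      have hβ' : IsTriadicLinearOn (diam f g)
          (centralLeaf f ++ List.replicate M' (1 : Fin 3)) β := by
        rwa [hple, List.replicate_add] at hβ
      have : M' ∈ leafSet g := g_linear_of_diam hg hδ hβ'
      exact not_mem_leafSet_of_lt (by omega) this

/-- the cocycle-type relation
`φ_{l(f)}(g ⋄ h) = φ_{l(f ⋄ g)}(h) · φ_{l(f)}(g)` (with product `a·b = b∘a`). -/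
theorem phi_cocycle (f g h : ℝ → ℝ) (hf : IsF3 f) (hg : IsF3 g) (hh : IsF3 h) :
    phi (centralLeaf f) (diam g h) =
      (fun t => phi (centralLeaf f) g (phi (centralLeaf (diam f g)) h t)) := by
  have E : centralLeaf (diam f g) = centralLeaf f ++ centralLeaf g := by
    unfold centralLeaf
    rw [leafExp_diam f g hf hg, List.replicate_add]
  funext t
  rw [E]
  set Lf := centralLeaf f with hLf
  set Lg := centralLeaf g with hLg
  by_cases ht : t ∈ Iaddr (Lf ++ Lg)
  · obtain ⟨ht1, ht2⟩ := mem_Iaddr_append.mp ht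
    have hs01 : psi Lg (psi Lf t) ∈ Set.Icc (0:ℝ) 1 := psi_mem _ ht2
    have hh01 : h (psi Lg (psi Lf t)) ∈ Set.Icc (0:ℝ) 1 := hh.2.1.mapsTo hs01
    have h1 : psiInv Lg (h (psi Lg (psi Lf t))) ∈ Set.Icc (0:ℝ) 1 :=
      Iaddr_subset_unit _ (psiInv_mem _ hh01)
    have h2 : psiInv Lf (psiInv Lg (h (psi Lg (psi Lf t)))) ∈ Iaddr Lf :=
      psiInv_mem _ h1
    rw [phi_apply_mem ht1, phi_apply_mem ht]
    show psiInv Lf (g (phi Lg h (psi Lf t))) =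
      phi Lf g (psiInv (Lf ++ Lg) (h (psi (Lf ++ Lg) t)))
    rw [psi_append, psiInv_append, phi_apply_mem h2, psi_psiInv,
      phi_apply_mem ht2]
  · by_cases ht1 : t ∈ Iaddr Lf
    · have ht2 : psi Lf t ∉ Iaddr Lg := fun hc => ht (mem_Iaddr_append.mpr ⟨ht1, hc⟩)
      rw [phi_apply_not_mem ht, phi_apply_mem ht1, phi_apply_mem ht1]
      show psiInv Lf (g (phi Lg h (psi Lf t))) = psiInv Lf (g (psi Lf t))
      rw [phi_apply_not_mem ht2]
    · rw [phi_apply_not_mem ht, phi_apply_not_mem ht1, phi_apply_not_mem ht1]
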